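/- Let m, n, p ≥ 1 and let F : Paths C_m ⥤ Paths C_n and G : Paths C_n ⥤ Paths C_p be functors between the free categories on the cyclic quivers. Then n · S(F ⋙ G) = S(F) · S(G). Equivalently, degree is multiplicative under composition: deg (F ⋙ G) = deg F · deg G, where deg F = S(F)/n, deg G = S(G)/p and deg (F ⋙ G) = S(F ⋙ G)/p. -/

import Mathlib

open CategoryTheory

/-- The cyclic quiver `C n`: vertex set `ZMod n`, with exactly one arrow `v ⟶ v + 1` for each
vertex `v`, and no other arrows. -/
abbrev CyclicQuiver (n : ℕ) := ZMod n

instance (n : ℕ) : Quiver (CyclicQuiver n) :=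
  ⟨fun a b => PLift (b = a + 1)⟩

/-- The unique arrow `e_v : v ⟶ v + 1` of the cyclic quiver. -/
def cyclicArrow (n : ℕ) (v : CyclicQuiver n) : v ⟶ (v + 1 : ZMod n) := ⟨rfl⟩



/-- View a vertex of the cyclic quiver as an object of the path category. -/
def toP {k : ℕ} (a : CyclicQuiver k) : Paths (CyclicQuiver k) := a

lemma keyA {k l : ℕ} (Φ : Paths (CyclicQuiver k) ⥤ Paths (CyclicQuiver l))
    {a b : CyclicQuiver k} (q : Quiver.Path a b) :
    b = a + (q.length : ZMod k) ∧
    Quiver.Path.length (Φ.map (X := toP a) (Y := toP b) q) =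
      ∑ i ∈ Finset.range q.length,
        Quiver.Path.length (Φ.map ((Paths.of (CyclicQuiver k)).map (cyclicArrow k (a + i)))) := by
  induction q with
  | nil =>
      constructor
      · simp
      · rw [show (Quiver.Path.nil : Quiver.Path a a) = 𝟙 (toP a) from rfl, Φ.map_id]
        simp
        rfl
  | @cons c d q e ih =>
      obtain ⟨rfl⟩ := e
      obtain ⟨hc, hlen⟩ := ih
      generalize hq : q.length = L at hc
      subst hc
      constructor
      · rw [Quiver.Path.length_cons, hq]; push_cast; ring
      · have hcomp : (Φ.map (X := toP a) (Y := toP _) (q.cons (cyclicArrow k _))) =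
            Φ.map (X := toP a) (Y := toP _) q
              ≫ Φ.map ((Paths.of (CyclicQuiver k)).map (cyclicArrow k (a + (L : ZMod k)))) := by
          convert! Φ.map_comp q ((Paths.of (CyclicQuiver k)).map (cyclicArrow k (a + (L : ZMod k))))
        rw [show q.cons ⟨rfl⟩ = q.cons (cyclicArrow k (a + (L : ZMod k))) from rfl]
        erw [hcomp]
        erw [show Quiver.Path.length (Φ.map (X := toP a) (Y := toP _) q
              ≫ Φ.map ((Paths.of (CyclicQuiver k)).map (cyclicArrow k (a + (L : ZMod k)))))
            = Quiver.Path.length (Φ.map (X := toP a) (Y := toP _) q)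
              + Quiver.Path.length (Φ.map ((Paths.of (CyclicQuiver k)).map (cyclicArrow k (a + (L : ZMod k))))) from
          Quiver.Path.length_comp _ _]
        rw [hlen, Quiver.Path.length_cons, hq, Finset.sum_range_succ]

lemma sum_range_full {n : ℕ} [NeZero n] (g : ZMod n → ℕ) (a : ZMod n) :
    ∑ i ∈ Finset.range n, g (a + i) = ∑ w : ZMod n, g w := by
  rw [← Fin.sum_univ_eq_sum_range (fun i => g (a + i)) n]
  have hbij : Function.Bijective (fun i : Fin n => ((i : ℕ) : ZMod n)) := by
    rw [Fintype.bijective_iff_injective_and_card]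
    refine ⟨fun i j h => ?_, by simp [ZMod.card]⟩
    apply Fin.ext
    simp only at h
    rw [← ZMod.val_cast_of_lt i.isLt, ← ZMod.val_cast_of_lt j.isLt, h]
  have hbij2 : Function.Bijective (fun i : Fin n => a + ((i : ℕ) : ZMod n)) :=
    (Equiv.addLeft a).bijective.comp hbij
  exact Fintype.sum_bijective _ hbij2 _ _ (fun i => rfl)

lemma sum_period {n : ℕ} [NeZero n] (g : ZMod n → ℕ) (a : ZMod n) (t : ℕ) :
    ∑ i ∈ Finset.range (n * t), g (a + i) = t * ∑ w : ZMod n, g w := by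
  induction t with
  | zero => simp
  | succ t ih =>
      rw [Nat.mul_succ, Finset.sum_range_add, ih]
      have : ∀ x ∈ Finset.range n, g (a + ((n * t + x : ℕ) : ZMod n))
          = g ((a + ((n * t : ℕ) : ZMod n)) + (x : ZMod n)) := by
        intro x _; push_cast; ring_nf
      rw [Finset.sum_congr rfl this, sum_range_full g (a + ((n * t : ℕ) : ZMod n))]
      ring

lemma path_cast_length {U : Type*} [Quiver U] {u v u' v' : U} (hu : u = u') (hv : v = v')
    (p : Quiver.Path u v) : (p.cast hu hv).length = p.length := by
  subst hu; subst hv; rfl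

/-- The path of length `ℓ` in the cyclic quiver starting at `a`. -/
def walk (n : ℕ) (a : CyclicQuiver n) : (ℓ : ℕ) → Quiver.Path a ((a + ℓ : ZMod n))
  | 0 => Quiver.Path.nil.cast rfl (by simp)
  | (ℓ + 1) => ((walk n a ℓ).cons (cyclicArrow n (a + ℓ))).cast rfl (by push_cast; ring)

lemma walk_length (n : ℕ) (a : CyclicQuiver n) (ℓ : ℕ) : (walk n a ℓ).length = ℓ := by
  induction ℓ with
  | zero => rw [walk, path_cast_length]; rfl
  | succ ℓ ih => rw [walk, path_cast_length, Quiver.Path.length_cons, ih]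

/-- Degree is multiplicative: for functors
`F : Paths C_m ⥤ Paths C_n` and `G : Paths C_n ⥤ Paths C_p` between free categories on
cyclic quivers, `n · S(F ⋙ G) = S(F) · S(G)`, where `S(-)` is the sum of the lengths of the
images of the generating arrows; equivalently `deg (F ⋙ G) = deg F · deg G`. -/
theorem stmt_12 (m n p : ℕ) [NeZero m] [NeZero n] [NeZero p]
    (F : Paths (CyclicQuiver m) ⥤ Paths (CyclicQuiver n))
    (G : Paths (CyclicQuiver n) ⥤ Paths (CyclicQuiver p)) :
    n * (∑ v : ZMod m,
        Quiver.Path.length ((F ⋙ G).map ((Paths.of (CyclicQuiver m)).map (cyclicArrow m v)))) =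
      (∑ v : ZMod m, Quiver.Path.length (F.map ((Paths.of (CyclicQuiver m)).map (cyclicArrow m v)))) *
      (∑ w : ZMod n, Quiver.Path.length (G.map ((Paths.of (CyclicQuiver n)).map (cyclicArrow n w)))) := by
  set W := walk m (0 : CyclicQuiver m) m with hWdef
  have hWlen : W.length = m := walk_length m 0 m
  have hF := keyA F W
  have hFG := keyA (F ⋙ G) W
  have hGF := keyA G (F.map (X := toP (0 : CyclicQuiver m))
      (Y := toP ((0 : ZMod m) + (m : ZMod m))) W)
  -- S(F) equals the length of F applied to the big loop
  have hSF := hF.2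
  rw [hWlen] at hSF
  have hSF' := hSF.trans (sum_range_full
    (fun v => Quiver.Path.length (F.map ((Paths.of (CyclicQuiver m)).map (cyclicArrow m v)))) 0)
  -- S(F ⋙ G) equals the length of (F ⋙ G) applied to the big loop
  have hSFG := hFG.2
  rw [hWlen] at hSFG
  have hSFG' := hSFG.trans (sum_range_full
    (fun v => Quiver.Path.length ((F ⋙ G).map ((Paths.of (CyclicQuiver m)).map (cyclicArrow m v)))) 0)
  -- divisibility: n divides the length of F.map W
  have h0 : toP ((0 : ZMod m) + (m : ZMod m)) = toP (0 : CyclicQuiver m) := by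
    rw [show ((0 : ZMod m) + (m : ZMod m)) = 0 by simp]
  have hzero : ((Quiver.Path.length (F.map (X := toP (0 : CyclicQuiver m))
      (Y := toP ((0 : ZMod m) + (m : ZMod m))) W) : ℕ) : ZMod n) = 0 := by
    have h1 := hGF.1
    have h2 : _ = _ := h1.symm.trans (congrArg F.obj h0)
    exact add_eq_left.mp h2
  obtain ⟨t, ht⟩ := (ZMod.natCast_eq_zero_iff _ n).mp hzero
  -- compute the length of G.map (F.map W)
  have h2 := hGF.2
  rw [ht] at h2
  have h3 := h2.trans (sum_period
    (fun w => Quiver.Path.length (G.map ((Paths.of (CyclicQuiver n)).map (cyclicArrow n w))))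
    (F.obj (toP (0 : CyclicQuiver m))) t)
  have h4 : (∑ v : ZMod m, Quiver.Path.length ((F ⋙ G).map ((Paths.of (CyclicQuiver m)).map (cyclicArrow m v))))
      = t * ∑ w : ZMod n, Quiver.Path.length (G.map ((Paths.of (CyclicQuiver n)).map (cyclicArrow n w))) :=
    hSFG'.symm.trans h3
  rw [h4, ← hSF', ht]
  ring
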